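/- Let h = [[2, 0, 0], [0, 3, 1], [0, 1, 1]] (a real symmetric 3×3 matrix), let A = [[0, h], [h, 0]] ∈ M_6(ℂ) in 3×3 block form, and let I = [[0, 1₃], [1₃, 0]] where 1₃ is the 3×3 identity. Then A is Hermitian, its negative eigenvalues are exactly −2−√2, −2 and −2+√2, the sum of the eigenspaces of A for its negative eigenvalues is a 3-dimensional subspace of ℂ⁶, and this subspace is contained in the (−1)-eigenspace of I. (In the notation of the paper, n₋(1,1) = 3 for the deformed Hamiltonian H₁.) -/

import Mathlib

open Complex Matrix

/-- The set of negative (real) eigenvalues of a `6×6` complex matrix. -/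
def negEigenvalues (A : Matrix (Fin 3 ⊕ Fin 3) (Fin 3 ⊕ Fin 3) ℂ) : Set ℂ :=
  {μ : ℂ | μ ∈ spectrum ℂ A ∧ ∃ x : ℝ, (x : ℂ) = μ ∧ x < 0}

/-- The sum of the eigenspaces of `A` for its negative eigenvalues, as a subspace of `ℂ⁶`. -/
noncomputable def negSpace (A : Matrix (Fin 3 ⊕ Fin 3) (Fin 3 ⊕ Fin 3) ℂ) :
    Submodule ℂ ((Fin 3 ⊕ Fin 3) → ℂ) :=
  ⨆ μ ∈ negEigenvalues A, Module.End.eigenspace (Matrix.toLin' A) μ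

/-- The inversion symmetry operator `I = [[0, 1₃], [1₃, 0]]`. -/
noncomputable def inversionOp : Matrix (Fin 3 ⊕ Fin 3) (Fin 3 ⊕ Fin 3) ℂ :=
  Matrix.fromBlocks 0 1 1 0

/-- The off-diagonal block `h₁(1,1)` of the deformed Hamiltonian at the fixed point `(1,1)`. -/
noncomputable def hOneOne : Matrix (Fin 3) (Fin 3) ℂ := !![2, 0, 0; 0, 3, 1; 0, 1, 1]

/-- The deformed Hamiltonian `H₁(1,1)` in block form. -/
noncomputable def AOneOne : Matrix (Fin 3 ⊕ Fin 3) (Fin 3 ⊕ Fin 3) ℂ :=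
  Matrix.fromBlocks 0 hOneOne hOneOne 0

/-! ### Auxiliary definitions and lemmas -/

section Aux

open Polynomial Module.End

/-- `c = √2` as a complex number. -/
noncomputable def nmC : ℂ := (Real.sqrt 2 : ℝ)

theorem nmC_sq : nmC ^ 2 = 2 := by
  rw [nmC, ← Complex.ofReal_pow, Real.sq_sqrt] <;> norm_num

/-- Eigenvector for the eigenvalue `-2`. -/
noncomputable def nmU1 : (Fin 3 ⊕ Fin 3) → ℂ := Sum.elim ![1,0,0] ![-1,0,0]
/-- Eigenvector for the eigenvalue `-2-√2`. -/
noncomputable def nmU2 : (Fin 3 ⊕ Fin 3) → ℂ := Sum.elim ![0,1,nmC-1] ![0,-1,1-nmC]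
/-- Eigenvector for the eigenvalue `-2+√2`. -/
noncomputable def nmU3 : (Fin 3 ⊕ Fin 3) → ℂ := Sum.elim ![0,1,-1-nmC] ![0,-1,1+nmC]

theorem nm_mulVec_u1 : AOneOne.mulVec nmU1 = (-2 : ℂ) • nmU1 := by
  funext i
  rcases i with i | i <;> fin_cases i <;>
    simp [mulVec, dotProduct, Fintype.sum_sum_type, Fin.sum_univ_three, AOneOne, hOneOne,
      Matrix.fromBlocks, Matrix.vecHead, Matrix.vecTail, nmU1]

theorem nm_mulVec_u2 : AOneOne.mulVec nmU2 = (-2 - nmC) • nmU2 := by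
  funext i
  rcases i with i | i <;> fin_cases i <;>
    simp [mulVec, dotProduct, Fintype.sum_sum_type, Fin.sum_univ_three, AOneOne, hOneOne,
      Matrix.fromBlocks, Matrix.vecHead, Matrix.vecTail, nmU2] <;>
    first
      | ring1
      | linear_combination nmC_sq
      | linear_combination 2*nmC_sq
      | linear_combination -nmC_sq
      | linear_combination -2*nmC_sq

theorem nm_mulVec_u3 : AOneOne.mulVec nmU3 = (-2 + nmC) • nmU3 := by
  funext i
  rcases i with i | i <;> fin_cases i <;>
    simp [mulVec, dotProduct, Fintype.sum_sum_type, Fin.sum_univ_three, AOneOne, hOneOne,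
      Matrix.fromBlocks, Matrix.vecHead, Matrix.vecTail, nmU3] <;>
    first
      | ring1
      | linear_combination nmC_sq
      | linear_combination 2*nmC_sq
      | linear_combination -nmC_sq
      | linear_combination -2*nmC_sq

theorem nm_mulVec_inv_u1 : inversionOp.mulVec nmU1 = (-1 : ℂ) • nmU1 := by
  funext i
  rcases i with i | i <;> fin_cases i <;>
    simp [mulVec, dotProduct, Fintype.sum_sum_type, Fin.sum_univ_three, inversionOp,
      Matrix.fromBlocks, Matrix.vecHead, Matrix.vecTail, nmU1, Matrix.one_apply] <;> ring1

theorem nm_mulVec_inv_u2 : inversionOp.mulVec nmU2 = (-1 : ℂ) • nmU2 := by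
  funext i
  rcases i with i | i <;> fin_cases i <;>
    simp [mulVec, dotProduct, Fintype.sum_sum_type, Fin.sum_univ_three, inversionOp,
      Matrix.fromBlocks, Matrix.vecHead, Matrix.vecTail, nmU2, Matrix.one_apply] <;> ring1

theorem nm_mulVec_inv_u3 : inversionOp.mulVec nmU3 = (-1 : ℂ) • nmU3 := by
  funext i
  rcases i with i | i <;> fin_cases i <;>
    simp [mulVec, dotProduct, Fintype.sum_sum_type, Fin.sum_univ_three, inversionOp,
      Matrix.fromBlocks, Matrix.vecHead, Matrix.vecTail, nmU3, Matrix.one_apply] <;> ring1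

/-- `A²` computed explicitly. -/
noncomputable def nmMsq : Matrix (Fin 3) (Fin 3) ℂ := !![4,0,0;0,10,4;0,4,2]

theorem nm_A_sq : AOneOne ^ 2 = Matrix.fromBlocks nmMsq 0 0 nmMsq := by
  rw [pow_two]
  ext i j
  rcases i with i | i <;> rcases j with j | j <;> fin_cases i <;> fin_cases j <;>
    simp [Matrix.mul_apply, Fintype.sum_sum_type, Fin.sum_univ_three, AOneOne, hOneOne, nmMsq,
      Matrix.fromBlocks, Matrix.vecHead, Matrix.vecTail] <;> norm_num

theorem nm_Msq_sq : nmMsq * nmMsq = !![16,0,0;0,116,48;0,48,20] := by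
  ext i j
  fin_cases i <;> fin_cases j <;>
    simp [Matrix.mul_apply, Fin.sum_univ_three, nmMsq, Matrix.vecHead, Matrix.vecTail] <;> norm_num

/-- The annihilating polynomial `(X²-4)(X⁴-12X²+4)`. -/
noncomputable def nmP : ℂ[X] := (X^2 - C 4) * (X^4 - C 12 * X^2 + C 4)

theorem nm_aeval : aeval AOneOne nmP = 0 := by
  have h4 : AOneOne ^ 4
      = Matrix.fromBlocks (!![16,0,0;0,116,48;0,48,20]) 0 0 (!![16,0,0;0,116,48;0,48,20]) := by
    have h44 : AOneOne ^ 4 = (AOneOne ^ 2) * (AOneOne ^ 2) := by rw [← pow_add]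
    rw [h44, nm_A_sq, Matrix.fromBlocks_multiply]
    simp [nm_Msq_sq]
  simp only [nmP, _root_.map_mul, map_sub, map_add, map_pow, aeval_X, aeval_C]
  rw [h4, nm_A_sq]
  ext i j
  rcases i with i | i <;> rcases j with j | j <;> fin_cases i <;> fin_cases j <;>
    simp [Matrix.mul_apply, Fintype.sum_sum_type, Fin.sum_univ_three, nmMsq,
      Matrix.fromBlocks, Matrix.vecHead, Matrix.vecTail, Matrix.algebraMap_matrix_apply] <;>
    norm_num

/-- Bridge between matrix spectrum and eigenvalues of `toLin'`. -/
theorem nm_mem_spectrum_iff (A : Matrix (Fin 3 ⊕ Fin 3) (Fin 3 ⊕ Fin 3) ℂ) (μ : ℂ) :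
    μ ∈ spectrum ℂ A ↔ Module.End.HasEigenvalue (Matrix.toLin' A) μ := by
  rw [← AlgEquiv.spectrum_eq (toLinAlgEquiv <| Pi.basisFun ℂ (Fin 3 ⊕ Fin 3)),
    ← Module.End.hasEigenvalue_iff_mem_spectrum]
  rfl

theorem nm_root_of_mem_spectrum {μ : ℂ} (hμ : μ ∈ spectrum ℂ AOneOne) :
    (μ^2-4)*(μ^4-12*μ^2+4) = 0 := by
  have := spectrum.subset_polynomial_aeval AOneOne nmP ⟨μ, hμ, rfl⟩
  rw [nm_aeval, spectrum.zero_eq] at this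
  simpa [nmP] using this

theorem nm_real_root {x : ℝ} (hx : x < 0) (h : (x^2-4)*(x^4-12*x^2+4) = 0) :
    x = -2 - Real.sqrt 2 ∨ x = -2 ∨ x = -2 + Real.sqrt 2 := by
  have hs : Real.sqrt 2 ^ 2 = 2 := Real.sq_sqrt (by norm_num)
  have hs0 : (0:ℝ) ≤ Real.sqrt 2 := Real.sqrt_nonneg 2
  have hs2 : Real.sqrt 2 < 2 := by nlinarith
  rcases mul_eq_zero.1 h with h1 | h1
  · right; left
    have : (x - 2) * (x + 2) = 0 := by linear_combination h1
    rcases mul_eq_zero.1 this with h2 | h2 <;> [linarith; linarith]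
  · have : (x^2 - 6 - 4*Real.sqrt 2) * (x^2 - 6 + 4*Real.sqrt 2) = 0 := by
      linear_combination h1 - 16 * hs
    rcases mul_eq_zero.1 this with h2 | h2
    · left
      have : (x - (2 + Real.sqrt 2)) * (x + (2 + Real.sqrt 2)) = 0 := by
        linear_combination h2 - hs
      rcases mul_eq_zero.1 this with h3 | h3 <;> [linarith; linarith]
    · right; right
      have : (x - (2 - Real.sqrt 2)) * (x + (2 - Real.sqrt 2)) = 0 := by
        linear_combination h2 - hs
      rcases mul_eq_zero.1 this with h3 | h3 <;> [linarith; linarith]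

theorem nm_u1_ne : nmU1 ≠ 0 := by
  intro h
  have := congrFun h (Sum.inl 0)
  simp [nmU1] at this

theorem nm_u2_ne : nmU2 ≠ 0 := by
  intro h
  have := congrFun h (Sum.inl 1)
  simp [nmU2] at this

theorem nm_u3_ne : nmU3 ≠ 0 := by
  intro h
  have := congrFun h (Sum.inl 1)
  simp [nmU3] at this

theorem nm_hasEigenvalue_m1 : Module.End.HasEigenvalue (Matrix.toLin' AOneOne) (-2 : ℂ) :=
  Module.End.hasEigenvalue_of_hasEigenvector
    ⟨Module.End.mem_eigenspace_iff.2 (by rw [Matrix.toLin'_apply]; exact nm_mulVec_u1), nm_u1_ne⟩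

theorem nm_hasEigenvalue_m2 : Module.End.HasEigenvalue (Matrix.toLin' AOneOne) (-2 - nmC) :=
  Module.End.hasEigenvalue_of_hasEigenvector
    ⟨Module.End.mem_eigenspace_iff.2 (by rw [Matrix.toLin'_apply]; exact nm_mulVec_u2), nm_u2_ne⟩

theorem nm_hasEigenvalue_m3 : Module.End.HasEigenvalue (Matrix.toLin' AOneOne) (-2 + nmC) :=
  Module.End.hasEigenvalue_of_hasEigenvector
    ⟨Module.End.mem_eigenspace_iff.2 (by rw [Matrix.toLin'_apply]; exact nm_mulVec_u3), nm_u3_ne⟩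

/-- The set of negative eigenvalues, explicitly. -/
theorem nm_negEigenvalues_eq :
    negEigenvalues AOneOne = {(-2 - nmC), -2, -2 + nmC} := by
  have hs : Real.sqrt 2 ^ 2 = 2 := Real.sq_sqrt (by norm_num)
  have hs0 : (0:ℝ) ≤ Real.sqrt 2 := Real.sqrt_nonneg 2
  have hs2 : Real.sqrt 2 < 2 := by nlinarith
  ext μ
  constructor
  · rintro ⟨hspec, x, rfl, hneg⟩
    have hroot : ((x:ℂ)^2-4)*((x:ℂ)^4-12*(x:ℂ)^2+4) = 0 := nm_root_of_mem_spectrum hspec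
    have hrootR : (x^2-4)*(x^4-12*x^2+4) = 0 := by exact_mod_cast hroot
    rcases nm_real_root hneg hrootR with h | h | h <;> subst h <;>
      simp [nmC, Set.mem_insert_iff] <;> push_cast <;> ring_nf <;> simp
  · intro hμ
    simp only [Set.mem_insert_iff, Set.mem_singleton_iff] at hμ
    rcases hμ with rfl | rfl | rfl
    · exact ⟨(nm_mem_spectrum_iff _ _).2 nm_hasEigenvalue_m2,
        ⟨-2 - Real.sqrt 2, by push_cast [nmC]; ring, by nlinarith⟩⟩
    · exact ⟨(nm_mem_spectrum_iff _ _).2 nm_hasEigenvalue_m1,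
        ⟨-2, by push_cast; ring, by norm_num⟩⟩
    · exact ⟨(nm_mem_spectrum_iff _ _).2 nm_hasEigenvalue_m3,
        ⟨-2 + Real.sqrt 2, by push_cast [nmC]; ring, by nlinarith⟩⟩

/-- Eigenspace of `-2` is inside the span of the three eigenvectors. -/
theorem nm_E1_le :
    Module.End.eigenspace (Matrix.toLin' AOneOne) (-2 : ℂ)
      ≤ Submodule.span ℂ {nmU1, nmU2, nmU3} := by
  intro v hv
  rw [Module.End.mem_eigenspace_iff, Matrix.toLin'_apply] at hv
  have e1 := congrFun hv (Sum.inl 0)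
  have e2 := congrFun hv (Sum.inl 1)
  have e3 := congrFun hv (Sum.inl 2)
  have e4 := congrFun hv (Sum.inr 0)
  have e5 := congrFun hv (Sum.inr 1)
  have e6 := congrFun hv (Sum.inr 2)
  simp [mulVec, dotProduct, Fintype.sum_sum_type, Fin.sum_univ_three, AOneOne, hOneOne,
    Matrix.fromBlocks, Matrix.vecHead, Matrix.vecTail] at e1 e2 e3 e4 e5 e6
  have hveq : v = v (Sum.inl 0) • nmU1 := by
    funext i
    rcases i with i | i <;> fin_cases i <;> simp [nmU1] <;>
      first
        | ring1
        | linear_combination (-1/7)*e2 + (-2/7)*e3 + (5/14)*e5 + (3/14)*e6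
        | linear_combination -((-1/7)*e2 + (-2/7)*e3 + (5/14)*e5 + (3/14)*e6)
        | linear_combination (-2/7)*e2 + (3/7)*e3 + (3/14)*e5 + (-1/14)*e6
        | linear_combination -((-2/7)*e2 + (3/7)*e3 + (3/14)*e5 + (-1/14)*e6)
        | linear_combination (1/2)*e1
        | linear_combination -((1/2)*e1)
        | linear_combination (5/14)*e2 + (3/14)*e3 + (-1/7)*e5 + (-2/7)*e6
        | linear_combination -((5/14)*e2 + (3/14)*e3 + (-1/7)*e5 + (-2/7)*e6)
        | linear_combination (3/14)*e2 + (-1/14)*e3 + (-2/7)*e5 + (3/7)*e6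
        | linear_combination -((3/14)*e2 + (-1/14)*e3 + (-2/7)*e5 + (3/7)*e6)
  rw [hveq]
  exact Submodule.smul_mem _ _ (Submodule.subset_span (by simp))

/-- Eigenspace of `-2-√2` is inside the span of the three eigenvectors. -/
theorem nm_E2_le :
    Module.End.eigenspace (Matrix.toLin' AOneOne) (-2 - nmC)
      ≤ Submodule.span ℂ {nmU1, nmU2, nmU3} := by
  intro v hv
  rw [Module.End.mem_eigenspace_iff, Matrix.toLin'_apply] at hv
  have e1 := congrFun hv (Sum.inl 0)
  have e2 := congrFun hv (Sum.inl 1)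
  have e3 := congrFun hv (Sum.inl 2)
  have e4 := congrFun hv (Sum.inr 0)
  have e5 := congrFun hv (Sum.inr 1)
  have e6 := congrFun hv (Sum.inr 2)
  simp [mulVec, dotProduct, Fintype.sum_sum_type, Fin.sum_univ_three, AOneOne, hOneOne,
    Matrix.fromBlocks, Matrix.vecHead, Matrix.vecTail] at e1 e2 e3 e4 e5 e6
  have hveq : v = v (Sum.inl 1) • nmU2 := by
    funext i
    rcases i with i | i <;> fin_cases i <;> simp [nmU2] <;>
      first
        | ring1
        | linear_combination (1/7+(3/14)*nmC)*e1 + (1/7+(-2/7)*nmC)*e4 + (-(3/14)*(v (Sum.inl 0)) + (2/7)*(v (Sum.inr 0)))*nmC_sq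
        | linear_combination -((1/7+(3/14)*nmC)*e1 + (1/7+(-2/7)*nmC)*e4 + (-(3/14)*(v (Sum.inl 0)) + (2/7)*(v (Sum.inr 0)))*nmC_sq)
        | linear_combination (-1/4)*e2 + (1/4)*e3 + (1/2+(-1/4)*nmC)*e5 + ((1/4)*(v (Sum.inr 1)))*nmC_sq
        | linear_combination -((-1/4)*e2 + (1/4)*e3 + (1/2+(-1/4)*nmC)*e5 + ((1/4)*(v (Sum.inr 1)))*nmC_sq)
        | linear_combination (1/7+(-2/7)*nmC)*e1 + (1/7+(3/14)*nmC)*e4 + ((2/7)*(v (Sum.inl 0)) + (-3/14)*(v (Sum.inr 0)))*nmC_sq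
        | linear_combination -((1/7+(-2/7)*nmC)*e1 + (1/7+(3/14)*nmC)*e4 + ((2/7)*(v (Sum.inl 0)) + (-3/14)*(v (Sum.inr 0)))*nmC_sq)
        | linear_combination (1/4+(-1/8)*nmC)*e2 + (-1/4+(1/8)*nmC)*e3 + (1/4)*e5 + ((1/8)*(v (Sum.inl 1)) + (-1/8)*(v (Sum.inl 2)))*nmC_sq
        | linear_combination -((1/4+(-1/8)*nmC)*e2 + (-1/4+(1/8)*nmC)*e3 + (1/4)*e5 + ((1/8)*(v (Sum.inl 1)) + (-1/8)*(v (Sum.inl 2)))*nmC_sq)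
        | linear_combination (1/4+(3/8)*nmC)*e2 + (3/4+(-3/8)*nmC)*e3 + (-3/4)*e5 + ((-3/8)*(v (Sum.inl 1)) + (3/8)*(v (Sum.inl 2)))*nmC_sq
        | linear_combination -((1/4+(3/8)*nmC)*e2 + (3/4+(-3/8)*nmC)*e3 + (-3/4)*e5 + ((-3/8)*(v (Sum.inl 1)) + (3/8)*(v (Sum.inl 2)))*nmC_sq)
  rw [hveq]
  exact Submodule.smul_mem _ _ (Submodule.subset_span (by simp))

/-- Eigenspace of `-2+√2` is inside the span of the three eigenvectors. -/
theorem nm_E3_le :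
    Module.End.eigenspace (Matrix.toLin' AOneOne) (-2 + nmC)
      ≤ Submodule.span ℂ {nmU1, nmU2, nmU3} := by
  intro v hv
  rw [Module.End.mem_eigenspace_iff, Matrix.toLin'_apply] at hv
  have e1 := congrFun hv (Sum.inl 0)
  have e2 := congrFun hv (Sum.inl 1)
  have e3 := congrFun hv (Sum.inl 2)
  have e4 := congrFun hv (Sum.inr 0)
  have e5 := congrFun hv (Sum.inr 1)
  have e6 := congrFun hv (Sum.inr 2)
  simp [mulVec, dotProduct, Fintype.sum_sum_type, Fin.sum_univ_three, AOneOne, hOneOne,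
    Matrix.fromBlocks, Matrix.vecHead, Matrix.vecTail] at e1 e2 e3 e4 e5 e6
  have hveq : v = v (Sum.inl 1) • nmU3 := by
    funext i
    rcases i with i | i <;> fin_cases i <;> simp [nmU3] <;>
      first
        | ring1
        | linear_combination (1/7+(-3/14)*nmC)*e1 + (1/7+(2/7)*nmC)*e4 + (-(3/14)*(v (Sum.inl 0)) + (2/7)*(v (Sum.inr 0)))*nmC_sq
        | linear_combination -((1/7+(-3/14)*nmC)*e1 + (1/7+(2/7)*nmC)*e4 + (-(3/14)*(v (Sum.inl 0)) + (2/7)*(v (Sum.inr 0)))*nmC_sq)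
        | linear_combination (-1/4)*e2 + (1/4)*e3 + (1/2+(1/4)*nmC)*e5 + ((1/4)*(v (Sum.inr 1)))*nmC_sq
        | linear_combination -((-1/4)*e2 + (1/4)*e3 + (1/2+(1/4)*nmC)*e5 + ((1/4)*(v (Sum.inr 1)))*nmC_sq)
        | linear_combination (1/7+(2/7)*nmC)*e1 + (1/7+(-3/14)*nmC)*e4 + ((2/7)*(v (Sum.inl 0)) + (-3/14)*(v (Sum.inr 0)))*nmC_sq
        | linear_combination -((1/7+(2/7)*nmC)*e1 + (1/7+(-3/14)*nmC)*e4 + ((2/7)*(v (Sum.inl 0)) + (-3/14)*(v (Sum.inr 0)))*nmC_sq)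
        | linear_combination (1/4+(1/8)*nmC)*e2 + (-1/4+(-1/8)*nmC)*e3 + (1/4)*e5 + ((1/8)*(v (Sum.inl 1)) + (-1/8)*(v (Sum.inl 2)))*nmC_sq
        | linear_combination -((1/4+(1/8)*nmC)*e2 + (-1/4+(-1/8)*nmC)*e3 + (1/4)*e5 + ((1/8)*(v (Sum.inl 1)) + (-1/8)*(v (Sum.inl 2)))*nmC_sq)
        | linear_combination (1/4+(-3/8)*nmC)*e2 + (3/4+(3/8)*nmC)*e3 + (-3/4)*e5 + ((-3/8)*(v (Sum.inl 1)) + (3/8)*(v (Sum.inl 2)))*nmC_sq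
        | linear_combination -((1/4+(-3/8)*nmC)*e2 + (3/4+(3/8)*nmC)*e3 + (-3/4)*e5 + ((-3/8)*(v (Sum.inl 1)) + (3/8)*(v (Sum.inl 2)))*nmC_sq)
  rw [hveq]
  exact Submodule.smul_mem _ _ (Submodule.subset_span (by simp))

theorem nm_negSpace_eq :
    negSpace AOneOne = Submodule.span ℂ {nmU1, nmU2, nmU3} := by
  have heq := nm_negEigenvalues_eq
  apply le_antisymm
  · refine iSup₂_le fun μ hμ => ?_
    rw [heq] at hμ
    simp only [Set.mem_insert_iff, Set.mem_singleton_iff] at hμ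
    rcases hμ with rfl | rfl | rfl
    · exact nm_E2_le
    · exact nm_E1_le
    · exact nm_E3_le
  · rw [Submodule.span_le]
    rintro x hx
    simp only [Set.mem_insert_iff, Set.mem_singleton_iff] at hx
    have hm1 : (-2 : ℂ) ∈ negEigenvalues AOneOne := by rw [heq]; simp
    have hm2 : (-2 - nmC : ℂ) ∈ negEigenvalues AOneOne := by rw [heq]; simp
    have hm3 : (-2 + nmC : ℂ) ∈ negEigenvalues AOneOne := by rw [heq]; simp
    rcases hx with rfl | rfl | rfl
    · exact le_iSup₂ (f := fun μ _ => Module.End.eigenspace (Matrix.toLin' AOneOne) μ) _ hm1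
        (Module.End.mem_eigenspace_iff.2 (by rw [Matrix.toLin'_apply]; exact nm_mulVec_u1))
    · exact le_iSup₂ (f := fun μ _ => Module.End.eigenspace (Matrix.toLin' AOneOne) μ) _ hm2
        (Module.End.mem_eigenspace_iff.2 (by rw [Matrix.toLin'_apply]; exact nm_mulVec_u2))
    · exact le_iSup₂ (f := fun μ _ => Module.End.eigenspace (Matrix.toLin' AOneOne) μ) _ hm3
        (Module.End.mem_eigenspace_iff.2 (by rw [Matrix.toLin'_apply]; exact nm_mulVec_u3))

theorem nm_linearIndependent : LinearIndependent ℂ ![nmU1, nmU2, nmU3] := by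
  have hcne : nmC ≠ 0 := by
    intro h
    have := nmC_sq
    rw [h] at this
    norm_num at this
  rw [Fintype.linearIndependent_iff]
  intro g hg
  have h0 := congrFun hg (Sum.inl 0)
  have h1 := congrFun hg (Sum.inl 1)
  have h2 := congrFun hg (Sum.inl 2)
  simp [Fin.sum_univ_three, nmU1, nmU2, nmU3, Matrix.vecHead, Matrix.vecTail] at h0 h1 h2
  have hg1 : g 1 = 0 := by
    have hkey : g 1 * (2 * nmC) = 0 := by linear_combination h2 - (-1-nmC) * h1
    rcases mul_eq_zero.1 hkey with h | h
    · exact h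
    · exact absurd h (by simpa using hcne)
  have hg2 : g 2 = 0 := by linear_combination h1 - hg1
  intro i
  fin_cases i <;> simpa [hg1, hg2] using h0

theorem nm_finrank : Module.finrank ℂ ↥(negSpace AOneOne) = 3 := by
  rw [nm_negSpace_eq]
  have hr : Set.range ![nmU1, nmU2, nmU3] = {nmU1, nmU2, nmU3} := by
    ext x
    constructor
    · rintro ⟨i, rfl⟩
      fin_cases i <;> simp
    · rintro (rfl | rfl | rfl)
      exacts [⟨0, rfl⟩, ⟨1, rfl⟩, ⟨2, rfl⟩]
  rw [← hr, finrank_span_eq_card nm_linearIndependent]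
  simp

theorem nm_inversion : negSpace AOneOne
    ≤ Module.End.eigenspace (Matrix.toLin' inversionOp) (-1) := by
  rw [nm_negSpace_eq, Submodule.span_le]
  rintro x hx
  simp only [Set.mem_insert_iff, Set.mem_singleton_iff] at hx
  rcases hx with rfl | rfl | rfl
  · exact Module.End.mem_eigenspace_iff.2 (by rw [Matrix.toLin'_apply]; exact nm_mulVec_inv_u1)
  · exact Module.End.mem_eigenspace_iff.2 (by rw [Matrix.toLin'_apply]; exact nm_mulVec_inv_u2)
  · exact Module.End.mem_eigenspace_iff.2 (by rw [Matrix.toLin'_apply]; exact nm_mulVec_inv_u3)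

theorem nm_hermitian : AOneOne.IsHermitian := by
  unfold Matrix.IsHermitian
  ext i j
  rcases i with i | i <;> rcases j with j | j <;> fin_cases i <;> fin_cases j <;>
    simp [AOneOne, hOneOne, Matrix.fromBlocks, Matrix.conjTranspose_apply,
      Matrix.vecHead, Matrix.vecTail]

end Aux

/-- `n₋(1,1) = 3`: `A = H₁(1,1)` is Hermitian, its negative eigenvalues are exactly
`−2−√2, −2, −2+√2`, the sum of the corresponding eigenspaces is 3-dimensional, and it is
contained in the `(−1)`-eigenspace of the inversion operator. -/
theorem nMinus_at_one_one :
    AOneOne.IsHermitian ∧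
    negEigenvalues AOneOne =
      {(-2 - (Real.sqrt 2 : ℂ)), -2, -2 + (Real.sqrt 2 : ℂ)} ∧
    Module.finrank ℂ ↥(negSpace AOneOne) = 3 ∧
    negSpace AOneOne ≤ Module.End.eigenspace (Matrix.toLin' inversionOp) (-1) :=
  ⟨nm_hermitian, nm_negEigenvalues_eq, nm_finrank, nm_inversion⟩
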